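/- For the sequence (n_k)_{k≥1} of the explicit construction, and for all a, b ∈ ℕ such that a/b = 2^r for some r ∈ ℤ \ {0}, there is a constant C (depending only on ε, R, d, a, b) such that for every integer c ≥ 0 one has Σ_{i₁≥1} Σ_{i₂≥1, i₂≠i₁} #{(k,ℓ) : k ∈ Δ_{i₁}, ℓ ∈ Δ_{i₂}, a·n_k − b·n_ℓ = c} ≤ C; that is, the number of solutions (k,ℓ) with a·n_k − b·n_ℓ = c for which k and ℓ lie in different blocks Δ_{i₁}, Δ_{i₂} is bounded uniformly in c ≥ 0. -/

import Mathlib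

open Real MeasureTheory Filter Finset

noncomputable section

/-- The block `Δ_i` of `R^i` consecutive positive integers. -/
def Block (R i : ℕ) : Finset ℕ :=
  Finset.Icc ((R ^ i - R) / (R - 1) + 1) ((R ^ (i + 1) - R) / (R - 1))

/-- `M(i) = ⌈i^(1-ε)⌉`. -/
def Mfun (ε : ℝ) (i : ℕ) : ℕ := ⌈(i : ℝ) ^ (1 - ε)⌉₊

def Tf (R : ℕ) : ℕ → ℕ
  | 0 => 0
  | j+1 => R * Tf R j + R

lemma Tf_pow {R : ℕ} (hR : 2 ≤ R) (j : ℕ) : R ^ (j+1) = (R-1) * Tf R j + R := by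
  obtain ⟨r, rfl⟩ : ∃ r, R = r + 2 := ⟨R - 2, by omega⟩
  induction j with
  | zero => simp [Tf]
  | succ j ih =>
    rw [pow_succ, ih]
    simp only [Tf, show r + 2 - 1 = r + 1 from rfl]
    ring

lemma Tf_mono {R : ℕ} (hR : 2 ≤ R) : Monotone (Tf R) := by
  apply monotone_nat_of_le_succ
  intro j
  have : Tf R j ≤ R * Tf R j := Nat.le_mul_of_pos_left _ (by omega)
  simp only [Tf]; omega

lemma Tf_ge {R : ℕ} (hR : 2 ≤ R) (j : ℕ) : j ≤ Tf R j := by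
  induction j with
  | zero => simp [Tf]
  | succ j ih =>
    have h2 : 2 * Tf R j ≤ R * Tf R j := Nat.mul_le_mul_right _ hR
    simp only [Tf]; omega

lemma block_eq {R : ℕ} (hR : 2 ≤ R) {i : ℕ} (hi : 1 ≤ i) :
    Block R i = Finset.Icc (Tf R (i-1) + 1) (Tf R i) := by
  obtain ⟨j, rfl⟩ : ∃ j, i = j + 1 := ⟨i - 1, by omega⟩
  have h1 := Tf_pow hR j
  have h2 := Tf_pow hR (j+1)
  unfold Block
  congr 1
  · have he : R ^ (j+1) - R = (R-1) * Tf R j := by omega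
    rw [he, Nat.mul_div_cancel_left _ (show 0 < R - 1 by omega)]
    simp
  · have he : R ^ (j+1+1) - R = (R-1) * Tf R (j+1) := by omega
    rw [he, Nat.mul_div_cancel_left _ (show 0 < R - 1 by omega)]

lemma mem_block {R i k : ℕ} (hR : 2 ≤ R) (hi : 1 ≤ i) :
    k ∈ Block R i ↔ Tf R (i-1) + 1 ≤ k ∧ k ≤ Tf R i := by
  rw [block_eq hR hi, Finset.mem_Icc]

def idxf (R k : ℕ) : ℕ := Nat.log R ((R-1)*k + R - 1)

def Ef (R k : ℕ) : ℕ := 2 ^ (idxf R k)^4 + k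

lemma idxf_eq {R i k : ℕ} (hR : 2 ≤ R) (hi : 1 ≤ i) (hk : k ∈ Block R i) : idxf R k = i := by
  rw [mem_block hR hi] at hk
  obtain ⟨j, rfl⟩ : ∃ j, i = j + 1 := ⟨i - 1, by omega⟩
  simp only [Nat.add_sub_cancel] at hk
  have h1 := Tf_pow hR j
  have h2 := Tf_pow hR (j+1)
  apply Nat.log_eq_of_pow_le_of_lt_pow
  · have : (R-1) * (Tf R j + 1) ≤ (R-1) * k := Nat.mul_le_mul_left _ (by omega)
    rw [Nat.mul_add] at this
    omega
  · have : (R-1) * k ≤ (R-1) * Tf R (j+1) := Nat.mul_le_mul_left _ hk.2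
    omega

lemma idxf_mem {R k : ℕ} (hR : 2 ≤ R) (hk : 1 ≤ k) :
    1 ≤ idxf R k ∧ k ∈ Block R (idxf R k) := by
  set N := (R-1)*k + R - 1 with hN
  have hk1 : (R-1) * 1 ≤ (R-1) * k := Nat.mul_le_mul_left _ hk
  have hNR : R ≤ N := by omega
  have hNpos : N ≠ 0 := by omega
  have hlog1 : 1 ≤ Nat.log R N := by
    rw [Nat.le_log_iff_pow_le (by omega) hNpos, pow_one]; exact hNR
  have hpl : R ^ (Nat.log R N) ≤ N := Nat.pow_log_le_self R hNpos
  have hpu : N < R ^ (Nat.log R N + 1) := Nat.lt_pow_succ_log_self (by omega) N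
  refine ⟨hlog1, ?_⟩
  have hidx : idxf R k = Nat.log R N := rfl
  rw [hidx, mem_block hR hlog1]
  obtain ⟨j, hj⟩ : ∃ j, Nat.log R N = j + 1 := ⟨Nat.log R N - 1, by omega⟩
  rw [hj] at hpl hpu ⊢
  simp only [Nat.add_sub_cancel]
  have h1 := Tf_pow hR j
  have h2 := Tf_pow hR (j+1)
  constructor
  · have hlt : (R-1) * Tf R j < (R-1) * k := by omega
    have := Nat.lt_of_mul_lt_mul_left hlt
    omega
  · have hle : (R-1) * k ≤ (R-1) * Tf R (j+1) := by omega
    exact Nat.le_of_mul_le_mul_left hle (by omega)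

lemma idxf_mono {R k k' : ℕ} (h : k ≤ k') : idxf R k ≤ idxf R k' := by
  apply Nat.log_mono_right
  have : (R-1)*k ≤ (R-1)*k' := Nat.mul_le_mul_left _ h
  omega

lemma idxf_le {R k : ℕ} (hR : 2 ≤ R) (hk : 1 ≤ k) : idxf R k ≤ k := by
  obtain ⟨h1, h2⟩ := idxf_mem hR hk
  rw [mem_block hR h1] at h2
  have := Tf_ge hR (idxf R k - 1)
  omega

lemma Ef_strictMono {R : ℕ} : StrictMono (Ef R) := by
  intro k k' h
  have h1 : idxf R k ≤ idxf R k' := idxf_mono h.le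
  have h2 : (2:ℕ) ^ (idxf R k)^4 ≤ 2 ^ (idxf R k')^4 :=
    Nat.pow_le_pow_right (by norm_num) (Nat.pow_le_pow_left h1 4)
  unfold Ef
  omega

/-- The explicit construction: parameters `ε ∈ (0,1)`, an integer `R > 8/ε`, an integer
`d ≥ 1`, for each `i ≥ 1` a partition of `Δ_i` into consecutive intervals of integers
`Δ_i^(1) < ⋯ < Δ_i^(M(i))` (element-wise) of essentially equal cardinality, and the
sequence `n_k := 2^(2^(i^4)) * (2^k + m)` for `k ∈ Δ_i^(m)`. -/
structure ExplicitConstruction where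
  ε : ℝ
  R : ℕ
  d : ℕ
  sub : ℕ → ℕ → Finset ℕ
  n : ℕ → ℕ
  hε : ε ∈ Set.Ioo (0 : ℝ) 1
  hR : 8 / ε < (R : ℝ)
  hd : 1 ≤ d
  hpart : ∀ i, 1 ≤ i → Block R i = (Finset.Icc 1 (Mfun ε i)).biUnion (sub i)
  hconsec : ∀ i, 1 ≤ i → ∀ m ∈ Finset.Icc 1 (Mfun ε i), ∃ lo hi, sub i m = Finset.Icc lo hi
  horder : ∀ i, 1 ≤ i → ∀ m ∈ Finset.Icc 1 (Mfun ε i), ∀ m' ∈ Finset.Icc 1 (Mfun ε i),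
    m < m' → ∀ k ∈ sub i m, ∀ l ∈ sub i m', k < l
  hcard : ∀ i, 1 ≤ i → ∀ m ∈ Finset.Icc 1 (Mfun ε i),
    |((sub i m).card : ℝ) - (R : ℝ) ^ i / (Mfun ε i : ℝ)| ≤ 1
  hn : ∀ i, 1 ≤ i → ∀ m ∈ Finset.Icc 1 (Mfun ε i), ∀ k ∈ sub i m,
    n k = 2 ^ 2 ^ i ^ 4 * (2 ^ k + m)


lemma R_ge9 (E : ExplicitConstruction) : 9 ≤ E.R := by
  obtain ⟨h0, h1⟩ := E.hε
  have h8 : (8:ℝ) < 8 / E.ε := by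
    rw [lt_div_iff₀ h0]; nlinarith
  have h8R : (8:ℝ) < (E.R : ℝ) := h8.trans E.hR
  have : (8:ℕ) < E.R := by exact_mod_cast h8R
  omega

lemma Mfun_le (E : ExplicitConstruction) {i : ℕ} (hi : 1 ≤ i) : Mfun E.ε i ≤ i := by
  obtain ⟨h0, h1⟩ := E.hε
  unfold Mfun
  rw [Nat.ceil_le]
  have hi1 : (1:ℝ) ≤ (i:ℝ) := by exact_mod_cast hi
  calc (i:ℝ) ^ (1 - E.ε) ≤ (i:ℝ) ^ (1:ℝ) := by
        apply Real.rpow_le_rpow_of_exponent_le hi1; linarith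
    _ = (i:ℝ) := Real.rpow_one _

lemma n_formula (E : ExplicitConstruction) {k : ℕ} (hk : 1 ≤ k) :
    ∃ m, 1 ≤ m ∧ m ≤ idxf E.R k ∧ E.n k = 2 ^ 2 ^ (idxf E.R k) ^ 4 * (2 ^ k + m) := by
  have hR2 : 2 ≤ E.R := by have := R_ge9 E; omega
  obtain ⟨h1, hmem⟩ := idxf_mem hR2 hk
  rw [E.hpart _ h1, Finset.mem_biUnion] at hmem
  obtain ⟨m, hm, hkm⟩ := hmem
  obtain ⟨hm1, hm2⟩ := Finset.mem_Icc.1 hm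
  exact ⟨m, hm1, hm2.trans (Mfun_le E h1), E.hn _ h1 m hm k hkm⟩

lemma n_bounds (E : ExplicitConstruction) {k : ℕ} (hk : 1 ≤ k) :
    2 ^ (Ef E.R k) < E.n k ∧ E.n k < 2 ^ (Ef E.R k + 1) := by
  have hR2 : 2 ≤ E.R := by have := R_ge9 E; omega
  obtain ⟨m, hm1, hm2, hform⟩ := n_formula E hk
  have hik : idxf E.R k ≤ k := idxf_le hR2 hk
  have hmk : m < 2 ^ k := lt_of_le_of_lt (hm2.trans hik) (Nat.lt_two_pow_self (n := k))
  have hP : 0 < (2:ℕ) ^ 2 ^ (idxf E.R k) ^ 4 := Nat.pow_pos (by norm_num)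
  constructor
  · show 2 ^ (2 ^ (idxf E.R k) ^ 4 + k) < E.n k
    rw [hform, pow_add]
    exact Nat.mul_lt_mul_of_le_of_lt (le_refl _) (by omega) hP
  · show E.n k < 2 ^ (2 ^ (idxf E.R k) ^ 4 + k + 1)
    rw [hform, add_assoc, pow_add]
    apply Nat.mul_lt_mul_of_le_of_lt (le_refl _) _ hP
    have : (2:ℕ) ^ (k+1) = 2 ^ k * 2 := pow_succ 2 k
    omega

lemma n_mono (E : ExplicitConstruction) {k k' : ℕ} (hk : 1 ≤ k) (h : k < k') :
    E.n k < E.n k' := by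
  have h1 := (n_bounds E hk).2
  have h2 := (n_bounds E (hk.trans h.le)).1
  have h3 : Ef E.R k + 1 ≤ Ef E.R k' := Ef_strictMono h
  calc E.n k < 2 ^ (Ef E.R k + 1) := h1
    _ ≤ 2 ^ (Ef E.R k') := Nat.pow_le_pow_right (by norm_num) h3
    _ < E.n k' := h2

/-- Lemma 2.1 (ii): if `a/b = 2^r` with `r ≠ 0`, the number of solutions `(k, ℓ)` of
`a n_k - b n_ℓ = c` with `k` and `ℓ` in different blocks `Δ_{i₁}`, `Δ_{i₂}` is bounded
uniformly in `c ≥ 0`. -/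
theorem statement2 (E : ExplicitConstruction) (a b : ℕ) (ha : 1 ≤ a) (hb : 1 ≤ b)
    (r : ℤ) (hr : r ≠ 0) (hpow : (a : ℝ) / (b : ℝ) = (2:ℝ) ^ r) :
    ∃ C : ℕ, ∀ c : ℤ, 0 ≤ c →
      {p : ℕ × ℕ | ∃ i₁ i₂ : ℕ, 1 ≤ i₁ ∧ 1 ≤ i₂ ∧ i₁ ≠ i₂ ∧
          p.1 ∈ Block E.R i₁ ∧ p.2 ∈ Block E.R i₂ ∧
          (a : ℤ) * (E.n p.1 : ℤ) - (b : ℤ) * (E.n p.2 : ℤ) = c}.Finite ∧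
      {p : ℕ × ℕ | ∃ i₁ i₂ : ℕ, 1 ≤ i₁ ∧ 1 ≤ i₂ ∧ i₁ ≠ i₂ ∧
          p.1 ∈ Block E.R i₁ ∧ p.2 ∈ Block E.R i₂ ∧
          (a : ℤ) * (E.n p.1 : ℤ) - (b : ℤ) * (E.n p.2 : ℤ) = c}.ncard ≤ C := by
  have hR9 : 9 ≤ E.R := R_ge9 E
  have hR2 : 2 ≤ E.R := by omega
  set T₀ : ℕ := a + b + 1 with hT0
  set i₀ : ℕ := 2 * E.R + T₀ + 2 with hi0
  set Bm : ℕ := 2 ^ i₀ ^ 4 + Tf E.R i₀ + T₀ with hBm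
  set K : ℕ := Tf E.R Bm with hKdef
  refine ⟨K + 1 + (a + 2), ?_⟩
  intro c hc
  set cn : ℕ := c.toNat with hcndef
  set L : ℕ := Nat.log 2 cn with hLdef
  set S : Set (ℕ × ℕ) := {p : ℕ × ℕ | ∃ i₁ i₂ : ℕ, 1 ≤ i₁ ∧ 1 ≤ i₂ ∧ i₁ ≠ i₂ ∧
      p.1 ∈ Block E.R i₁ ∧ p.2 ∈ Block E.R i₂ ∧
      (a : ℤ) * (E.n p.1 : ℤ) - (b : ℤ) * (E.n p.2 : ℤ) = c} with hSdef
  have key : ∀ k l : ℕ, (k, l) ∈ S → 1 ≤ k ∧ 1 ≤ l ∧ a * E.n k = b * E.n l + cn ∧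
      (k ≤ K ∨ (L - a ≤ Ef E.R k ∧ Ef E.R k ≤ L + 1)) := by
    intro k l hp
    rw [hSdef] at hp
    obtain ⟨i₁, i₂, hi₁, hi₂, hne, hk, hl, heq⟩ := hp
    have hkb := (mem_block hR2 hi₁).1 hk
    have hlb := (mem_block hR2 hi₂).1 hl
    have hk1 : 1 ≤ k := by omega
    have hl1 : 1 ≤ l := by omega
    have hik : idxf E.R k = i₁ := idxf_eq hR2 hi₁ hk
    have hil : idxf E.R l = i₂ := idxf_eq hR2 hi₂ hl
    have heqn : a * E.n k = b * E.n l + cn := by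
      have hcnc : (cn : ℤ) = c := Int.toNat_of_nonneg hc
      have hz : (a:ℤ) * (E.n k : ℤ) = (b:ℤ) * (E.n l : ℤ) + (cn : ℤ) := by
        rw [hcnc]; linarith [heq]
      exact_mod_cast hz
    refine ⟨hk1, hl1, heqn, ?_⟩
    have hnk := n_bounds E hk1
    have hnl := n_bounds E hl1
    have hE1k : Ef E.R k = 2 ^ i₁ ^ 4 + k := by simp [Ef, hik]
    have hE2l : Ef E.R l = 2 ^ i₂ ^ 4 + l := by simp [Ef, hil]
    have ha2 : a ≤ 2 ^ a := (Nat.lt_two_pow_self (n := a)).le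
    have hb2 : b ≤ 2 ^ b := (Nat.lt_two_pow_self (n := b)).le
    have hub : a * E.n k < 2 ^ (Ef E.R k + 1 + a) := by
      calc a * E.n k ≤ 2 ^ a * E.n k := Nat.mul_le_mul_right _ ha2
        _ < 2 ^ a * 2 ^ (Ef E.R k + 1) :=
            Nat.mul_lt_mul_of_le_of_lt (le_refl _) hnk.2 (Nat.pow_pos (by norm_num))
        _ = 2 ^ (Ef E.R k + 1 + a) := by rw [← pow_add]; ring_nf
    by_cases hcase : Ef E.R k ≤ Ef E.R l + (b + 1)
    · left
      have hE2le : Ef E.R l ≤ Ef E.R k + a := by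
        have h1 : 2 ^ Ef E.R l < 2 ^ (Ef E.R k + 1 + a) := by
          calc 2 ^ Ef E.R l < E.n l := hnl.1
            _ ≤ b * E.n l := Nat.le_mul_of_pos_left _ hb
            _ ≤ a * E.n k := by omega
            _ < _ := hub
        have := (Nat.pow_lt_pow_iff_right (by norm_num : 1 < 2)).1 h1
        omega
      have gen : ∀ i j : ℕ, 1 ≤ i → i < j → 2 ^ j ^ 4 ≤ 2 ^ i ^ 4 + Tf E.R i + T₀ →
          i ≤ Bm ∧ j ≤ Bm := by
        intro i j hi hij hle
        have hii0 : i ≤ i₀ := by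
          by_contra hcon
          push_neg at hcon
          have hident := Tf_pow hR2 i
          have hTfle : Tf E.R i ≤ E.R ^ (i+1) := by
            have h' : Tf E.R i ≤ (E.R - 1) * Tf E.R i := Nat.le_mul_of_pos_left _ (by omega)
            omega
          have hRp : E.R ^ (i+1) ≤ 2 ^ (E.R * (i+1)) := by
            calc E.R ^ (i+1) ≤ (2 ^ E.R) ^ (i+1) := Nat.pow_le_pow_left (Nat.lt_two_pow_self (n := E.R)).le _
              _ = 2 ^ (E.R * (i+1)) := by rw [← pow_mul]
          have hQle : (i+1)^4 ≤ j ^ 4 := Nat.pow_le_pow_left (by omega) 4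
          have hexp : (i+1)^4 = i^4 + 4*i^3 + 6*i^2 + 4*i + 1 := by ring
          have hi3 : i ≤ i^3 := Nat.le_self_pow (by norm_num) i
          have hi2 : i ≤ i^2 := Nat.le_self_pow (by norm_num) i
          have hi4 : i ≤ i^4 := Nat.le_self_pow (by norm_num) i
          have h1 : i^4 + 2 ≤ (i+1)^4 := by omega
          have h2 : E.R * (i+1) + 2 ≤ (i+1)^4 := by
            have hiR : E.R + 2 ≤ i + 1 := by omega
            have hsq : (E.R + 2) * (i+1) ≤ (i+1) * (i+1) := Nat.mul_le_mul_right _ hiR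
            have hdist : (E.R + 2) * (i+1) = E.R * (i+1) + 2*(i+1) := by ring
            have hq2 : (i+1) * (i+1) ≤ (i+1)^4 := by
              have : (i+1)*(i+1) = (i+1)^2 := by ring
              rw [this]
              exact Nat.pow_le_pow_right (by omega) (by norm_num)
            omega
          have h3 : T₀ + 2 ≤ (i+1)^4 := by omega
          have e1 : 2^(i^4) * 4 ≤ 2^((i+1)^4) := by
            have : (2:ℕ)^(i^4) * 4 = 2^(i^4+2) := by rw [pow_add]; norm_num
            rw [this]
            exact Nat.pow_le_pow_right (by norm_num) h1
          have e2 : 2^(E.R*(i+1)) * 4 ≤ 2^((i+1)^4) := by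
            have : (2:ℕ)^(E.R*(i+1)) * 4 = 2^(E.R*(i+1)+2) := by rw [pow_add]; norm_num
            rw [this]
            exact Nat.pow_le_pow_right (by norm_num) h2
          have e3 : T₀ * 4 ≤ 2^((i+1)^4) := by
            have hT : T₀ ≤ 2^T₀ := (Nat.lt_two_pow_self (n := T₀)).le
            have h' : (2:ℕ)^(T₀+2) ≤ 2^((i+1)^4) := Nat.pow_le_pow_right (by norm_num) h3
            have h'' : (2:ℕ)^(T₀+2) = 2^T₀ * 4 := by rw [pow_add]; norm_num
            omega
          have e4 : (2:ℕ)^((i+1)^4) ≤ 2^(j^4) := Nat.pow_le_pow_right (by norm_num) hQle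
          have hpos : 1 ≤ (2:ℕ)^(i^4) := Nat.one_le_two_pow
          omega
        constructor
        · have hi02 : i₀ ≤ 2^(i₀^4) :=
            le_trans (Nat.le_self_pow (by norm_num) i₀) (Nat.lt_two_pow_self (n := i₀ ^ 4)).le
          omega
        · have hle' : 2 ^ j^4 ≤ 2 ^ i₀^4 + Tf E.R i₀ + T₀ := by
            have hm := Tf_mono hR2 hii0
            have hp : (2:ℕ)^(i^4) ≤ 2^(i₀^4) :=
              Nat.pow_le_pow_right (by norm_num) (Nat.pow_le_pow_left hii0 4)
            omega
          have hj2 : j ≤ 2^(j^4) := by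
            calc j ≤ 2^j := (Nat.lt_two_pow_self (n := j)).le
              _ ≤ 2^(j^4) := Nat.pow_le_pow_right (by norm_num)
                  (Nat.le_self_pow (by norm_num) j)
          omega
      rcases Nat.lt_or_ge i₁ i₂ with hlt | hge
      · have happ := gen i₁ i₂ hi₁ hlt (by
          have hg1 : 2 ^ i₂^4 ≤ Ef E.R l := by rw [hE2l]; omega
          have hg2 := hE2le
          rw [hE1k] at hg2
          have hkT : k ≤ Tf E.R i₁ := hkb.2
          omega)
        have hm := Tf_mono hR2 happ.1
        have hkT : k ≤ Tf E.R i₁ := hkb.2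
        omega
      · have hlt2 : i₂ < i₁ := by omega
        have happ := gen i₂ i₁ hi₂ hlt2 (by
          have hg1 : 2 ^ i₁^4 ≤ Ef E.R k := by rw [hE1k]; omega
          have hg2 := hcase
          rw [hE2l] at hg2
          have hlT : l ≤ Tf E.R i₂ := hlb.2
          omega)
        have hm := Tf_mono hR2 happ.2
        have hkT : k ≤ Tf E.R i₁ := hkb.2
        omega
    · right
      push_neg at hcase
      have hE1pos : 1 ≤ Ef E.R k := by
        have : 1 ≤ (2:ℕ)^(i₁^4) := Nat.one_le_two_pow
        rw [hE1k]; omega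
      have hbl : b * E.n l < 2 ^ (Ef E.R k - 1) := by
        calc b * E.n l ≤ 2^b * E.n l := Nat.mul_le_mul_right _ hb2
          _ < 2^b * 2^(Ef E.R l + 1) :=
              Nat.mul_lt_mul_of_le_of_lt (le_refl _) hnl.2 (Nat.pow_pos (by norm_num))
          _ = 2 ^ (Ef E.R l + 1 + b) := by rw [← pow_add]; ring_nf
          _ ≤ 2 ^ (Ef E.R k - 1) := Nat.pow_le_pow_right (by norm_num) (by omega)
      have hak : 2 ^ Ef E.R k < a * E.n k :=
        lt_of_lt_of_le hnk.1 (Nat.le_mul_of_pos_left _ ha)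
      have h2E : (2:ℕ) ^ Ef E.R k = 2 ^ (Ef E.R k - 1) * 2 := by
        rw [← pow_succ]; congr 1; omega
      have hcnlow : 2 ^ (Ef E.R k - 1) < cn := by omega
      have hcnup : cn < 2 ^ (Ef E.R k + 1 + a) := by omega
      have hcn0 : cn ≠ 0 := by
        have : 1 ≤ (2:ℕ)^(Ef E.R k - 1) := Nat.one_le_two_pow
        omega
      have hup : Ef E.R k - 1 ≤ L := by
        have hlm := Nat.log_mono_right (b := 2) hcnlow.le
        rwa [Nat.log_pow (by norm_num : 1 < 2)] at hlm
      have hlow : L < Ef E.R k + 1 + a := Nat.log_lt_of_lt_pow hcn0 hcnup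
      exact ⟨by omega, by omega⟩
  have hinj : Set.InjOn Prod.fst S := by
    rintro ⟨k, l⟩ hp ⟨k', l'⟩ hq h
    obtain rfl : k = k' := h
    obtain ⟨hk1, hl1, he1, -⟩ := key k l hp
    obtain ⟨-, hl1', he2, -⟩ := key k l' hq
    have hnn : E.n l = E.n l' := by
      have : b * E.n l = b * E.n l' := by omega
      exact Nat.eq_of_mul_eq_mul_left (by omega) this
    have hll : l = l' := by
      rcases Nat.lt_trichotomy l l' with h' | h' | h'
      · exact absurd (n_mono E hl1 h') (by omega)
      · exact h'
      · exact absurd (n_mono E hl1' h') (by omega)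
    rw [hll]
  set A : Set ℕ := Set.Iic K with hA
  set B : Set ℕ := Ef E.R ⁻¹' (Set.Icc (L - a) (L + 1)) with hB
  have himg : Prod.fst '' S ⊆ A ∪ B := by
    rintro x ⟨⟨k, l⟩, hp, rfl⟩
    obtain ⟨-, -, -, hc'⟩ := key k l hp
    rcases hc' with h | h
    · exact Or.inl h
    · exact Or.inr (Set.mem_preimage.2 (Set.mem_Icc.2 h))
  have hBfin : B.Finite :=
    Set.Finite.preimage (Ef_strictMono.injective.injOn) (Set.finite_Icc _ _)
  have hBcard : B.ncard ≤ a + 2 := by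
    have h1 : B.ncard ≤ (Set.Icc (L - a) (L + 1)).ncard :=
      Set.ncard_le_ncard_of_injOn (Ef E.R) (fun x hx => hx)
        (Ef_strictMono.injective.injOn) (Set.finite_Icc (L - a) (L + 1))
    have h2 : (Set.Icc (L - a) (L + 1)).ncard = L + 1 + 1 - (L - a) := by
      rw [← Finset.coe_Icc, Set.ncard_coe_finset, Nat.card_Icc]
    omega
  have hAfin : A.Finite := Set.finite_Iic K
  have hAcard : A.ncard = K + 1 := by
    rw [hA, ← Finset.coe_Iic, Set.ncard_coe_finset, Nat.card_Iic]
  have himgfin : (Prod.fst '' S).Finite := (hAfin.union hBfin).subset himg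
  have hSfin : S.Finite := Set.Finite.of_finite_image himgfin hinj
  refine ⟨hSfin, ?_⟩
  calc S.ncard = (Prod.fst '' S).ncard := (Set.ncard_image_of_injOn hinj).symm
    _ ≤ (A ∪ B).ncard := Set.ncard_le_ncard himg (hAfin.union hBfin)
    _ ≤ A.ncard + B.ncard := Set.ncard_union_le A B
    _ ≤ K + 1 + (a + 2) := by omega
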